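/- Let n ≥ 1, let e, e_f, σ ∈ ℝⁿ, let G, Ω be real symmetric positive definite n×n matrices, let ϖ > 0 with ‖e_f‖ < ϖ, let ρ̂ ≥ 0, let ϑ ≥ 0 with ‖σ‖‖e_f‖ ≤ ϖ ϑ, let z satisfy 0 < z < λ_min(G), let ϱ_M > 0, ζ ≥ 0, V₁ ∈ ℝ satisfy V₁ ≤ ϱ_M(‖e_f‖² + ‖e‖²) + ζ, and set ϱ₁ = min{ λ_min(G) − z, λ_min(Ω) } / ϱ_M. Then −e_fᵀ G e_f − eᵀ Ω e + e_fᵀ( −ρ̂ e_f/ϖ + σ ) ≤ −ϱ₁ V₁ − z ‖e_f‖² + ϱ₁ ζ + ϖ ϑ. -/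

import Mathlib

noncomputable def matVec {n : ℕ} (A : Matrix (Fin n) (Fin n) ℝ)
    (x : EuclideanSpace ℝ (Fin n)) : EuclideanSpace ℝ (Fin n) :=
  Matrix.toEuclideanCLM (𝕜 := ℝ) A x

/-- Real inner product `xᵀ y` on Euclidean space. -/
noncomputable def dotE {n : ℕ} (x y : EuclideanSpace ℝ (Fin n)) : ℝ := inner ℝ x y

/-- Minimum eigenvalue of a Hermitian (real symmetric) matrix. -/
noncomputable def lamMin {n : ℕ} (A : Matrix (Fin n) (Fin n) ℝ) (hA : A.IsHermitian) : ℝ :=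
  ⨅ i, hA.eigenvalues i

lemma rayleigh_lower {n : ℕ} (hn : 1 ≤ n) (A : Matrix (Fin n) (Fin n) ℝ)
    (hA : A.IsHermitian) (x : EuclideanSpace ℝ (Fin n)) :
    lamMin A hA * ‖x‖ ^ 2 ≤ dotE x (matVec A x) := by
  haveI : Nonempty (Fin n) := Fin.pos_iff_nonempty.mp hn
  classical
  set b := hA.eigenvectorBasis with hb
  have hT : (Matrix.toEuclideanLin A).IsSymmetric :=
    Matrix.isHermitian_iff_isSymmetric.1 hA
  have hmat : matVec A x = Matrix.toEuclideanLin A x := by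
    rw [matVec, ← Matrix.coe_toEuclideanCLM_eq_toEuclideanLin]
    rfl
  have hAb : ∀ i, Matrix.toEuclideanLin A (b i) = hA.eigenvalues i • b i := by
    intro i
    apply (WithLp.equiv 2 _).injective
    ext j
    have := congrFun (hA.mulVec_eigenvectorBasis i) j
    simpa [Matrix.toEuclideanLin_apply] using this
  have key : dotE x (matVec A x) = ∑ i, hA.eigenvalues i * (inner ℝ (b i) x : ℝ) ^ 2 := by
    rw [dotE, hmat, ← b.sum_inner_mul_inner x (Matrix.toEuclideanLin A x)]
    refine Finset.sum_congr rfl fun i _ => ?_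
    have : (inner ℝ (b i) (Matrix.toEuclideanLin A x) : ℝ)
        = hA.eigenvalues i * (inner ℝ (b i) x : ℝ) := by
      rw [← hT (b i) x, hAb i, inner_smul_left]
      simp
    rw [this, real_inner_comm x (b i)]
    ring
  have hnorm : ‖x‖ ^ 2 = ∑ i, (inner ℝ (b i) x : ℝ) ^ 2 := by
    rw [← real_inner_self_eq_norm_sq, ← b.sum_inner_mul_inner x x]
    refine Finset.sum_congr rfl fun i _ => ?_
    rw [real_inner_comm x (b i)]; ring
  rw [key, hnorm, Finset.mul_sum]
  refine Finset.sum_le_sum fun i _ => ?_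
  have h1 : lamMin A hA ≤ hA.eigenvalues i := ciInf_le (Finite.bddBelow_range _) i
  have h2 : (0:ℝ) ≤ (inner ℝ (b i) x : ℝ) ^ 2 := sq_nonneg _
  exact mul_le_mul_of_nonneg_right h1 h2

lemma lamMin_pos {n : ℕ} (hn : 1 ≤ n) {A : Matrix (Fin n) (Fin n) ℝ}
    (hA : A.PosDef) : 0 < lamMin A hA.isHermitian := by
  haveI : Nonempty (Fin n) := Fin.pos_iff_nonempty.mp hn
  obtain ⟨i, hi⟩ := Finite.exists_min hA.isHermitian.eigenvalues
  have : lamMin A hA.isHermitian = hA.isHermitian.eigenvalues i :=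
    le_antisymm (ciInf_le (Finite.bddBelow_range _) i) (le_ciInf hi)
  rw [this]; exact hA.eigenvalues_pos i

theorem case3_boundary_layer_bound {n : ℕ} (hn : 1 ≤ n)
    (e ef σ : EuclideanSpace ℝ (Fin n))
    (G Ω : Matrix (Fin n) (Fin n) ℝ) (hG : G.PosDef) (hΩ : Ω.PosDef)
    (ϖ : ℝ) (hϖ : 0 < ϖ) (hefϖ : ‖ef‖ < ϖ)
    (ρ : ℝ) (hρ : 0 ≤ ρ)
    (ϑ : ℝ) (hϑ : 0 ≤ ϑ) (hσϑ : ‖σ‖ * ‖ef‖ ≤ ϖ * ϑ)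
    (z : ℝ) (hz0 : 0 < z) (hz : z < lamMin G hG.isHermitian)
    (ϱM ζ V1 : ℝ) (hϱM : 0 < ϱM) (hζ : 0 ≤ ζ)
    (hV1 : V1 ≤ ϱM * (‖ef‖ ^ 2 + ‖e‖ ^ 2) + ζ)
    (ϱ1 : ℝ)
    (hϱ1 : ϱ1 = min (lamMin G hG.isHermitian - z) (lamMin Ω hΩ.isHermitian) / ϱM) :
    -dotE ef (matVec G ef) - dotE e (matVec Ω e)
      + dotE ef (-((ρ / ϖ) • ef) + σ) ≤
      -ϱ1 * V1 - z * ‖ef‖ ^ 2 + ϱ1 * ζ + ϖ * ϑ := by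
  set gm := lamMin G hG.isHermitian
  set om := lamMin Ω hΩ.isHermitian
  have hGq := rayleigh_lower hn G hG.isHermitian ef
  have hΩq := rayleigh_lower hn Ω hΩ.isHermitian e
  have hom : 0 < om := lamMin_pos hn hΩ
  have hcross : dotE ef (-((ρ / ϖ) • ef) + σ) ≤ ϖ * ϑ := by
    have h1 : dotE ef (-((ρ / ϖ) • ef) + σ)
        = -(ρ / ϖ) * ‖ef‖ ^ 2 + dotE ef σ := by
      rw [dotE, inner_add_right, inner_neg_right, real_inner_smul_right,
        real_inner_self_eq_norm_sq, dotE]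
      ring
    have h2 : dotE ef σ ≤ ϖ * ϑ := by
      calc dotE ef σ ≤ ‖ef‖ * ‖σ‖ := real_inner_le_norm ef σ
        _ ≤ ϖ * ϑ := by rw [mul_comm]; exact hσϑ
    have h3 : 0 ≤ ρ / ϖ * ‖ef‖ ^ 2 :=
      mul_nonneg (div_nonneg hρ hϖ.le) (sq_nonneg _)
    linarith [h1, h2, h3]
  set m := min (gm - z) om with hm
  have hm0 : 0 < m := lt_min (by linarith) hom
  have hϱ1M : ϱ1 * ϱM = m := by rw [hϱ1]; field_simp
  have hϱ1pos : 0 < ϱ1 := by rw [hϱ1]; positivity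
  have hmg : m ≤ gm - z := min_le_left _ _
  have hmo : m ≤ om := min_le_right _ _
  have hV : -ϱ1 * V1 ≥ -ϱ1 * (ϱM * (‖ef‖ ^ 2 + ‖e‖ ^ 2) + ζ) := by
    nlinarith
  nlinarith [sq_nonneg ‖ef‖, sq_nonneg ‖e‖, hGq, hΩq, hcross, hV, hϱ1M,
    mul_le_mul_of_nonneg_right hmg (sq_nonneg ‖ef‖),
    mul_le_mul_of_nonneg_right hmo (sq_nonneg ‖e‖)]
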